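/- Let a ≥ 2, c ≥ 1 and k ≥ 1 be integers and let f_k : ℂ² → ℂ² be the polynomial map f_k(z,w) = (z^a, z^c w + z^k). Then the topological degree of the germ of f_k at 0 equals gcd(a,k) if k ≤ c, and equals a if k > c. -/

import Mathlib

open scoped ENat

/-- The topological degree of the germ at `0` of a map `f` whose representative is defined
on the domain `Ω ⊆ ℂ²`: the infimum over open neighborhoods `U ⊆ Ω` of `0` of the supremum,
over points `y` with finite fiber under `f|_U`, of the cardinality of that fiber. -/
noncomputable def topdeg (Ω : Set (ℂ × ℂ)) (f : ℂ × ℂ → ℂ × ℂ) : ℕ∞ :=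
  ⨅ (U : Set (ℂ × ℂ)) (_ : IsOpen U ∧ (0 : ℂ × ℂ) ∈ U ∧ U ⊆ Ω),
    ⨆ (y : ℂ × ℂ) (_ : (U ∩ f ⁻¹' {y}).Finite), ((U ∩ f ⁻¹' {y}).ncard : ℕ∞)

/-- the complex absolute value, as a bundled absolute value (removed from Mathlib) -/
noncomputable def Complex.abs : AbsoluteValue ℂ ℝ :=
  IsAbsoluteValue.toAbsoluteValue (norm : ℂ → ℝ)

lemma Complex.abs_ofReal (r : ℝ) : Complex.abs (r : ℂ) = |r| := by
  show ‖(r : ℂ)‖ = |r|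
  rw [Complex.norm_real, Real.norm_eq_abs]

lemma Complex.abs_exp_ofReal_mul_I (x : ℝ) : Complex.abs (Complex.exp (x * Complex.I)) = 1 :=
  Complex.norm_exp_ofReal_mul_I x

section Aux

open Polynomial Set
variable {a c k : ℕ} {f : ℂ × ℂ → ℂ × ℂ}

/-- points in the fiber satisfy the two equations -/
lemma fiber_eqs (hf : ∀ p : ℂ × ℂ, f p = (p.1 ^ a, p.1 ^ c * p.2 + p.1 ^ k))
    {U : Set (ℂ × ℂ)} {y : ℂ × ℂ} {p : ℂ × ℂ} (hp : p ∈ U ∩ f ⁻¹' {y}) :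
    p.1 ^ a = y.1 ∧ p.1 ^ c * p.2 + p.1 ^ k = y.2 := by
  have h : f p = y := hp.2
  rw [hf] at h
  exact ⟨congrArg Prod.fst h, congrArg Prod.snd h⟩

lemma fiber_injOn (ha : a ≠ 0)
    (hf : ∀ p : ℂ × ℂ, f p = (p.1 ^ a, p.1 ^ c * p.2 + p.1 ^ k))
    {U : Set (ℂ × ℂ)} {y : ℂ × ℂ} (hy : y.1 ≠ 0) :
    Set.InjOn Prod.fst (U ∩ f ⁻¹' {y}) := by
  rintro p hp q hq h
  obtain ⟨hp1, hp2⟩ := fiber_eqs hf hp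
  obtain ⟨hq1, hq2⟩ := fiber_eqs hf hq
  have hz : p.1 ≠ 0 := by
    intro h0; rw [h0, zero_pow ha] at hp1; exact hy hp1.symm
  have h2 : p.1 ^ c * p.2 = p.1 ^ c * q.2 := by
    have h3 : p.1 ^ c * p.2 + p.1 ^ k = q.1 ^ c * q.2 + q.1 ^ k := by rw [hp2, hq2]
    rw [← h] at h3
    exact add_right_cancel h3
  exact Prod.ext h (mul_left_cancel₀ (pow_ne_zero c hz) h2)

lemma fiber_fst_mem (ha : a ≠ 0)
    (hf : ∀ p : ℂ × ℂ, f p = (p.1 ^ a, p.1 ^ c * p.2 + p.1 ^ k))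
    {U : Set (ℂ × ℂ)} {y : ℂ × ℂ} {p : ℂ × ℂ} (hp : p ∈ U ∩ f ⁻¹' {y}) :
    p.1 ∈ ((nthRoots a y.1).toFinset : Set ℂ) := by
  simp only [Finset.mem_coe, Multiset.mem_toFinset]
  rw [mem_nthRoots (Nat.pos_of_ne_zero ha)]
  exact (fiber_eqs hf hp).1

lemma fiber_finite (ha : a ≠ 0)
    (hf : ∀ p : ℂ × ℂ, f p = (p.1 ^ a, p.1 ^ c * p.2 + p.1 ^ k))
    {U : Set (ℂ × ℂ)} {y : ℂ × ℂ} (hy : y.1 ≠ 0) :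
    (U ∩ f ⁻¹' {y}).Finite := by
  apply Set.Finite.of_finite_image (f := Prod.fst) ?_ (fiber_injOn ha hf hy)
  apply Set.Finite.subset ((nthRoots a y.1).toFinset : Set ℂ).toFinite
  rintro z ⟨p, hp, rfl⟩
  exact fiber_fst_mem ha hf hp

lemma fiber_card_le (ha : a ≠ 0)
    (hf : ∀ p : ℂ × ℂ, f p = (p.1 ^ a, p.1 ^ c * p.2 + p.1 ^ k))
    {U : Set (ℂ × ℂ)} {y : ℂ × ℂ} (hy : y.1 ≠ 0) :
    (U ∩ f ⁻¹' {y}).ncard ≤ a := by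
  have h1 : (U ∩ f ⁻¹' {y}).ncard ≤ (((nthRoots a y.1).toFinset : Set ℂ)).ncard :=
    Set.ncard_le_ncard_of_injOn Prod.fst (fun p hp => fiber_fst_mem ha hf hp)
      (fiber_injOn ha hf hy) (Set.toFinite _)
  refine h1.trans ?_
  rw [Set.ncard_coe_finset]
  exact (Multiset.toFinset_card_le _).trans (card_nthRoots a y.1)

lemma fiber_zero_card (ha : a ≠ 0) (hc : 1 ≤ c) (hk : 1 ≤ k)
    (hf : ∀ p : ℂ × ℂ, f p = (p.1 ^ a, p.1 ^ c * p.2 + p.1 ^ k))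
    {U : Set (ℂ × ℂ)} (hU : IsOpen U) (h0 : (0 : ℂ × ℂ) ∈ U)
    {y : ℂ × ℂ} (hy : y.1 = 0) (hfin : (U ∩ f ⁻¹' {y}).Finite) :
    (U ∩ f ⁻¹' {y}).ncard = 0 := by
  by_cases hy2 : y.2 = 0
  · -- fiber is infinite: contradiction
    exfalso
    obtain ⟨ε, hε, hball⟩ := Metric.isOpen_iff.1 hU 0 h0
    have hy' : y = 0 := Prod.ext hy hy2
    have hinf : (U ∩ f ⁻¹' {y}).Infinite := by
      apply Set.infinite_of_injective_forall_mem
        (f := fun n : ℕ => (((0 : ℂ), ((ε / (n + 2) : ℝ) : ℂ)) : ℂ × ℂ))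
      · intro n m h
        simp only [Prod.mk.injEq, Complex.ofReal_inj, true_and] at h
        have hn2 : ((n : ℝ) + 2) ≠ 0 := by positivity
        have hm2 : ((m : ℝ) + 2) ≠ 0 := by positivity
        have h4 := (div_eq_div_iff hn2 hm2).1 h
        have h5 : (n : ℝ) = m := by nlinarith [h4]
        exact_mod_cast h5
      · intro n
        refine ⟨?_, ?_⟩
        · apply hball
          simp only [Metric.mem_ball, Prod.dist_eq, dist_zero_right]
          have h1 : ‖((ε / (n + 2) : ℝ) : ℂ)‖ < ε := by
            rw [Complex.norm_real, Real.norm_eq_abs, abs_of_pos (by positivity)]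
            rw [div_lt_iff₀ (by positivity)]
            nlinarith
          exact max_lt (by simpa using hε) (by simpa using h1)
        · simp only [Set.mem_preimage, hf, Set.mem_singleton_iff, hy']
          simp [zero_pow ha, zero_pow (by omega : c ≠ 0), zero_pow (by omega : k ≠ 0)]
    exact hinf hfin
  · -- fiber is empty
    have hemp : U ∩ f ⁻¹' {y} = ∅ := by
      ext p
      simp only [Set.mem_inter_iff, Set.mem_preimage, Set.mem_singleton_iff,
        Set.mem_empty_iff_false, iff_false, not_and]
      intro _ hfp
      rw [hf] at hfp
      have h1 : p.1 ^ a = y.1 := congrArg Prod.fst hfp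
      have hz : p.1 = 0 := by
        by_contra hz
        exact (pow_ne_zero a hz) (hy ▸ h1)
      have h2 : p.1 ^ c * p.2 + p.1 ^ k = y.2 := congrArg Prod.snd hfp
      rw [hz, zero_pow (by omega : c ≠ 0), zero_pow (by omega : k ≠ 0)] at h2
      simp at h2
      exact hy2 h2.symm
    rw [hemp]; simp

end Aux

/-- For integers `a ≥ 2`, `c ≥ 1`, `k ≥ 1`, the topological degree at `0`
of `f_k(z,w) = (z^a, z^c w + z^k)` equals `gcd(a,k)` if `k ≤ c`, and equals `a` if `k > c`. -/
theorem topdeg_class_four_map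
    (a c k : ℕ) (ha : 2 ≤ a) (hc : 1 ≤ c) (hk : 1 ≤ k)
    (f : ℂ × ℂ → ℂ × ℂ)
    (hf : ∀ p : ℂ × ℂ, f p = (p.1 ^ a, p.1 ^ c * p.2 + p.1 ^ k)) :
    topdeg Set.univ f = if k ≤ c then (Nat.gcd a k : ℕ∞) else (a : ℕ∞) := by
  have ha0 : a ≠ 0 := by omega
  have hapos : 0 < a := by omega
  set d := Nat.gcd a k with hd
  have hd0 : d ≠ 0 := Nat.gcd_ne_zero_left ha0
  set ζ : ℂ := Complex.exp (2 * Real.pi * Complex.I / a) with hζdef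
  have hζ : IsPrimitiveRoot ζ a := Complex.isPrimitiveRoot_exp a ha0
  have hζabs : Complex.abs ζ = 1 := by
    have h2 : (2 * Real.pi * Complex.I / (a : ℂ)) = ((2 * Real.pi / a : ℝ) : ℂ) * Complex.I := by
      push_cast; ring
    rw [hζdef, h2, Complex.abs_exp_ofReal_mul_I]
  -- generic lower bound machinery
  have lower_gen : ∀ (U : Set (ℂ × ℂ)), IsOpen U → (0 : ℂ × ℂ) ∈ U →
      ∀ (N : ℕ) (g : ℝ → ℕ → ℂ × ℂ) (y : ℝ → ℂ × ℂ),
      (∀ t : ℝ, 0 < t → t ≤ 1/2 → (y t).1 ≠ 0) →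
      (∀ t : ℝ, 0 < t → t ≤ 1/2 → ∀ m < N, f (g t m) = y t) →
      (∀ t : ℝ, 0 < t → t ≤ 1/2 → ∀ m < N, max (Complex.abs (g t m).1) (Complex.abs (g t m).2) ≤ t) →
      (∀ t : ℝ, 0 < t → t ≤ 1/2 → ∀ m < N, ∀ m' < N, g t m = g t m' → m = m') →
      ∃ y' : ℂ × ℂ, (U ∩ f ⁻¹' {y'}).Finite ∧ N ≤ (U ∩ f ⁻¹' {y'}).ncard := by
    intro U hUo hU0 N g y hy1 hgf hgU hginj
    obtain ⟨r, hr, hball⟩ := Metric.isOpen_iff.1 hUo 0 hU0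
    set t : ℝ := min r 1 / 2 with ht
    have ht0 : 0 < t := by positivity
    have ht12 : t ≤ 1/2 := by
      rw [ht]; have := min_le_right r 1; linarith
    have htr : t < r := by
      rw [ht]; rcases le_total r 1 with h | h
      · rw [min_eq_left h]; linarith
      · rw [min_eq_right h]; linarith
    refine ⟨y t, fiber_finite ha0 hf (hy1 t ht0 ht12), ?_⟩
    have hsub : ↑((Finset.range N).image (g t)) ⊆ U ∩ f ⁻¹' {y t} := by
      intro p hp
      simp only [Finset.coe_image, Set.mem_image, Finset.mem_coe, Finset.mem_range] at hp
      obtain ⟨m, hm, rfl⟩ := hp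
      refine ⟨hball ?_, ?_⟩
      · simp only [Metric.mem_ball, Prod.dist_eq, Complex.dist_eq, Prod.fst_zero, Prod.snd_zero, sub_zero]
        calc max (Complex.abs (g t m).1) (Complex.abs (g t m).2) ≤ t := hgU t ht0 ht12 m hm
          _ < r := htr
      · simp only [Set.mem_preimage, Set.mem_singleton_iff]
        exact hgf t ht0 ht12 m hm
    have hcard : ((Finset.range N).image (g t)).card = N := by
      rw [Finset.card_image_of_injOn, Finset.card_range]
      intro m hm m' hm' h
      exact hginj t ht0 ht12 m (Finset.mem_range.1 hm) m' (Finset.mem_range.1 hm') h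
    calc N = (↑((Finset.range N).image (g t)) : Set (ℂ × ℂ)).ncard := by
            rw [Set.ncard_coe_finset, hcard]
      _ ≤ (U ∩ f ⁻¹' {y t}).ncard :=
            Set.ncard_le_ncard hsub (fiber_finite ha0 hf (hy1 t ht0 ht12))

  -- upper bound helper
  have upper_gen : ∀ (U : Set (ℂ × ℂ)), IsOpen U → (0 : ℂ × ℂ) ∈ U → ∀ N : ℕ,
      (∀ y : ℂ × ℂ, (U ∩ f ⁻¹' {y}).Finite → (U ∩ f ⁻¹' {y}).ncard ≤ N) →
      topdeg Set.univ f ≤ (N : ℕ∞) := by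
    intro U hUo hU0 N key
    refine iInf_le_of_le U (iInf_le_of_le ⟨hUo, hU0, Set.subset_univ U⟩
      (iSup_le fun y => iSup_le fun hfin => ?_))
    exact_mod_cast key y hfin
  by_cases hkc : k ≤ c
  · -- case k ≤ c : answer is d = gcd a k
    rw [if_pos hkc]
    obtain ⟨A, hA⟩ : d ∣ a := Nat.gcd_dvd_left a k
    obtain ⟨K, hK⟩ : d ∣ k := Nat.gcd_dvd_right a k
    have hA0 : A ≠ 0 := by rintro rfl; omega
    -- lower bound
    have lower : (d : ℕ∞) ≤ topdeg Set.univ f := by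
      refine le_iInf fun U => le_iInf fun hU => ?_
      have h1 : ∀ t : ℝ, 0 < t → t ≤ 1/2 → ((((t:ℝ):ℂ) ^ a, ((t:ℝ):ℂ) ^ k) : ℂ × ℂ).1 ≠ 0 := by
        intro t ht0 _
        exact pow_ne_zero a (by exact_mod_cast ht0.ne')
      have h2 : ∀ t : ℝ, 0 < t → t ≤ 1/2 → ∀ m < d,
          f (ζ ^ (m * A) * (t : ℂ), (0 : ℂ)) = (((t:ℝ):ℂ) ^ a, ((t:ℝ):ℂ) ^ k) := by
        intro t ht0 ht1 m hm
        rw [hf]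
        have e1 : (ζ ^ (m * A)) ^ a = 1 := by
          rw [← pow_mul, hζ.pow_eq_one_iff_dvd]
          exact ⟨m * A, by ring⟩
        have e2 : (ζ ^ (m * A)) ^ k = 1 := by
          rw [← pow_mul, hζ.pow_eq_one_iff_dvd]
          exact ⟨m * K, by rw [hA, hK]; ring⟩
        simp only [Prod.mk.injEq]
        constructor
        · rw [mul_pow, e1, one_mul]
        · rw [mul_zero, zero_add, mul_pow, e2, one_mul]
      have h3 : ∀ t : ℝ, 0 < t → t ≤ 1/2 → ∀ m < d,
          max (Complex.abs (ζ ^ (m * A) * (t : ℂ))) (Complex.abs (0 : ℂ)) ≤ t := by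
        intro t ht0 ht1 m hm
        have e1 : Complex.abs (ζ ^ (m * A) * (t : ℂ)) = t := by
          rw [map_mul, map_pow, hζabs, one_pow, one_mul, Complex.abs_ofReal,
            abs_of_pos ht0]
        rw [e1, map_zero]
        exact max_le le_rfl ht0.le
      have h4 : ∀ t : ℝ, 0 < t → t ≤ 1/2 → ∀ m < d, ∀ m' < d,
          ((ζ ^ (m * A) * (t : ℂ), (0:ℂ)) : ℂ × ℂ) = (ζ ^ (m' * A) * (t : ℂ), (0:ℂ)) →
          m = m' := by
        intro t ht0 ht1 m hm m' hm' h
        have ht : ((t:ℝ):ℂ) ≠ 0 := by exact_mod_cast ht0.ne'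
        have e1 : ζ ^ (m * A) = ζ ^ (m' * A) := by
          have := congrArg Prod.fst h
          simp only at this
          exact mul_right_cancel₀ ht this
        have hlt1 : m * A < a := by
          rw [hA]
          exact (Nat.mul_lt_mul_right (Nat.pos_of_ne_zero hA0)).mpr hm
        have hlt2 : m' * A < a := by
          rw [hA]
          exact (Nat.mul_lt_mul_right (Nat.pos_of_ne_zero hA0)).mpr hm'
        have e2 := hζ.pow_inj hlt1 hlt2 e1
        exact Nat.eq_of_mul_eq_mul_right (Nat.pos_of_ne_zero hA0) e2
      obtain ⟨y', hfin, hcard⟩ := lower_gen U hU.1 hU.2.1 d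
        (fun t m => (ζ ^ (m * A) * (t : ℂ), 0))
        (fun t => (((t:ℝ):ℂ) ^ a, ((t:ℝ):ℂ) ^ k)) h1 h2 h3 h4
      exact le_iSup_of_le y' (le_iSup_of_le hfin (by exact_mod_cast hcard))
    -- upper bound
    have upper : topdeg Set.univ f ≤ (d : ℕ∞) := by
      classical
      set R : Finset ℂ := (Polynomial.nthRoots a (1:ℂ)).toFinset.erase 1 with hRdef
      have hR : ζ ∈ R := by
        rw [hRdef, Finset.mem_erase, Multiset.mem_toFinset,
          Polynomial.mem_nthRoots hapos]
        exact ⟨hζ.ne_one (by omega), hζ.pow_eq_one⟩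
      have hRne : R.Nonempty := ⟨ζ, hR⟩
      set C : ℝ := R.inf' hRne (fun v => Complex.abs (v - 1)) with hCdef
      have hCpos : 0 < C := by
        rw [hCdef, Finset.lt_inf'_iff]
        intro v hv
        have hv1 : v ≠ 1 := (Finset.mem_erase.1 hv).1
        have : v - 1 ≠ 0 := sub_ne_zero.2 hv1
        simpa [AbsoluteValue.pos_iff] using this
      set U : Set (ℂ × ℂ) := Metric.ball (0:ℂ) 1 ×ˢ Metric.ball (0:ℂ) (C/2) with hUdef
      have hUo : IsOpen U := Metric.isOpen_ball.prod Metric.isOpen_ball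
      have hU0 : (0 : ℂ × ℂ) ∈ U := by
        rw [hUdef, Set.mem_prod]
        constructor <;> simp [hCpos]
      refine upper_gen U hUo hU0 d ?_
      intro y hfin
      by_cases hy1 : y.1 = 0
      · rw [fiber_zero_card ha0 hc hk hf hUo hU0 hy1 hfin]
        exact Nat.zero_le d
      · rcases Set.eq_empty_or_nonempty (U ∩ f ⁻¹' {y}) with he | ⟨p0, hp0⟩
        · rw [he]; simp
        · have hp01 : p0.1 ≠ 0 := by
            intro h0
            apply hy1
            rw [← (fiber_eqs hf hp0).1, h0, zero_pow ha0]
          -- every fiber point maps to a d-th root of unity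
          have hmem : ∀ p ∈ U ∩ f ⁻¹' {y},
              (p.1 / p0.1) ∈ ((Polynomial.nthRoots d (1:ℂ)).toFinset : Set ℂ) := by
            intro p hp
            have hz : p.1 ≠ 0 := by
              intro h0
              apply hy1
              rw [← (fiber_eqs hf hp).1, h0, zero_pow ha0]
            set u : ℂ := p.1 / p0.1 with hu
            have hu0 : u ≠ 0 := div_ne_zero hz hp01
            have hua : u ^ a = 1 := by
              rw [hu, div_pow, (fiber_eqs hf hp).1, (fiber_eqs hf hp0).1, div_self hy1]
            have huabs : Complex.abs u = 1 := by
              have e1 : Complex.abs u ^ a = 1 := by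
                rw [← map_pow, hua, map_one]
              exact (pow_left_inj₀ (Complex.abs.nonneg u) zero_le_one ha0).1
                (by rw [e1, one_pow])
            have hzz0 : p.1 = u * p0.1 := by
              rw [hu, div_mul_cancel₀ _ hp01]
            have habs : Complex.abs p.1 = Complex.abs p0.1 := by
              rw [hzz0, map_mul, huabs, one_mul]
            have huk : u ^ k = 1 := by
              by_contra hne
              have hva : u ^ k ∈ R := by
                rw [hRdef, Finset.mem_erase, Multiset.mem_toFinset,
                  Polynomial.mem_nthRoots hapos]
                refine ⟨hne, ?_⟩
                rw [← pow_mul, mul_comm, pow_mul, hua, one_pow]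
              have hCle : C ≤ Complex.abs (u ^ k - 1) := Finset.inf'_le _ hva
              have heq : p.1 ^ k - p0.1 ^ k = p0.1 ^ k * (u ^ k - 1) := by
                rw [hzz0, mul_pow]; ring
              have habs1 : Complex.abs (p.1 ^ k - p0.1 ^ k)
                  = Complex.abs p0.1 ^ k * Complex.abs (u ^ k - 1) := by
                rw [heq, map_mul, map_pow]
              have hge : Complex.abs p0.1 ^ k * C ≤ Complex.abs (p.1 ^ k - p0.1 ^ k) := by
                rw [habs1]
                exact mul_le_mul_of_nonneg_left hCle (pow_nonneg (Complex.abs.nonneg _) k)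
              -- the other inequality
              have heq2 : p.1 ^ k - p0.1 ^ k = p0.1 ^ c * p0.2 - p.1 ^ c * p.2 := by
                have e1 := (fiber_eqs hf hp).2
                have e2 := (fiber_eqs hf hp0).2
                have : p.1 ^ c * p.2 + p.1 ^ k = p0.1 ^ c * p0.2 + p0.1 ^ k := by
                  rw [e1, e2]
                linear_combination this
              have hpU : p ∈ U := hp.1
              have hp0U : p0 ∈ U := hp0.1
              rw [hUdef, Set.mem_prod, Metric.mem_ball, Metric.mem_ball,
                Complex.dist_eq, sub_zero, Complex.dist_eq, sub_zero] at hpU hp0U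
              have hr0 : 0 < Complex.abs p0.1 := by
                simpa [AbsoluteValue.pos_iff] using hp01
              have habsp : 0 < Complex.abs p.1 := by
                simpa [AbsoluteValue.pos_iff] using hz
              have hrc : Complex.abs p0.1 ^ c ≤ Complex.abs p0.1 ^ k :=
                pow_le_pow_of_le_one (Complex.abs.nonneg _) hp0U.1.le hkc
              have htri : Complex.abs (p0.1 ^ c * p0.2 - p.1 ^ c * p.2)
                  ≤ Complex.abs (p0.1 ^ c * p0.2) + Complex.abs (p.1 ^ c * p.2) := by
                simpa [sub_eq_add_neg, Complex.abs.map_neg] using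
                  Complex.abs.add_le (p0.1 ^ c * p0.2) (-(p.1 ^ c * p.2))
              have hlt : Complex.abs (p.1 ^ k - p0.1 ^ k) < Complex.abs p0.1 ^ k * C := by
                rw [heq2]
                calc Complex.abs (p0.1 ^ c * p0.2 - p.1 ^ c * p.2)
                    ≤ Complex.abs (p0.1 ^ c * p0.2) + Complex.abs (p.1 ^ c * p.2) := htri
                  _ = Complex.abs p0.1 ^ c * Complex.abs p0.2
                      + Complex.abs p.1 ^ c * Complex.abs p.2 := by
                        rw [map_mul, map_pow, map_mul, map_pow]
                  _ < Complex.abs p0.1 ^ c * (C/2) + Complex.abs p.1 ^ c * (C/2) := by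
                        apply add_lt_add
                        · exact mul_lt_mul_of_pos_left hp0U.2 (pow_pos hr0 c)
                        · exact mul_lt_mul_of_pos_left hpU.2 (pow_pos habsp c)
                  _ = Complex.abs p0.1 ^ c * C := by rw [habs]; ring
                  _ ≤ Complex.abs p0.1 ^ k * C :=
                        mul_le_mul_of_nonneg_right hrc hCpos.le
              linarith
            have hud : u ^ d = 1 := pow_gcd_eq_one.2 ⟨hua, huk⟩
            simp only [Finset.mem_coe, Multiset.mem_toFinset]
            rw [Polynomial.mem_nthRoots (Nat.pos_of_ne_zero hd0)]
            exact hud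
          have hinj : Set.InjOn (fun p : ℂ × ℂ => p.1 / p0.1) (U ∩ f ⁻¹' {y}) := by
            intro p hp q hq h
            simp only at h
            have hpq : p.1 = q.1 := by
              field_simp at h
              exact h
            exact fiber_injOn ha0 hf hy1 hp hq hpq
          have step := Set.ncard_le_ncard_of_injOn (fun p : ℂ × ℂ => p.1 / p0.1)
            hmem hinj (Set.toFinite _)
          refine step.trans ?_
          rw [Set.ncard_coe_finset]
          exact (Multiset.toFinset_card_le _).trans (Polynomial.card_nthRoots d 1)
    exact le_antisymm upper lower
  · -- case k > c : answer is a
    rw [if_neg hkc]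
    have hck : c < k := by omega
    -- lower bound
    have lower : (a : ℕ∞) ≤ topdeg Set.univ f := by
      refine le_iInf fun U => le_iInf fun hU => ?_
      have h1 : ∀ t : ℝ, 0 < t → t ≤ 1/2 → ((((t:ℝ):ℂ) ^ a, (0:ℂ)) : ℂ × ℂ).1 ≠ 0 := by
        intro t ht0 _
        exact pow_ne_zero a (by exact_mod_cast ht0.ne')
      have h2 : ∀ t : ℝ, 0 < t → t ≤ 1/2 → ∀ m < a,
          f (ζ ^ m * (t : ℂ), -(ζ ^ m * (t : ℂ)) ^ (k - c)) = (((t:ℝ):ℂ) ^ a, (0:ℂ)) := by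
        intro t ht0 ht1 m hm
        rw [hf]
        have e1 : (ζ ^ m) ^ a = 1 := by
          rw [← pow_mul, hζ.pow_eq_one_iff_dvd]
          exact ⟨m, by ring⟩
        have eck : c + (k - c) = k := by omega
        simp only [Prod.mk.injEq]
        constructor
        · rw [mul_pow, e1, one_mul]
        · rw [mul_neg, ← pow_add, eck]; ring
      have h3 : ∀ t : ℝ, 0 < t → t ≤ 1/2 → ∀ m < a,
          max (Complex.abs (ζ ^ m * (t : ℂ))) (Complex.abs (-(ζ ^ m * (t : ℂ)) ^ (k - c))) ≤ t := by
        intro t ht0 ht1 m hm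
        have e1 : Complex.abs (ζ ^ m * (t : ℂ)) = t := by
          rw [map_mul, map_pow, hζabs, one_pow, one_mul, Complex.abs_ofReal,
            abs_of_pos ht0]
        have e2 : Complex.abs (-(ζ ^ m * (t : ℂ)) ^ (k - c)) = t ^ (k - c) := by
          rw [Complex.abs.map_neg, map_pow, map_mul, map_pow, hζabs, one_pow, one_mul,
            Complex.abs_ofReal, abs_of_pos ht0]
        rw [e1, e2]
        refine max_le le_rfl ?_
        calc t ^ (k - c) ≤ t ^ 1 :=
              pow_le_pow_of_le_one ht0.le (by linarith) (by omega)
          _ = t := pow_one t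
      have h4 : ∀ t : ℝ, 0 < t → t ≤ 1/2 → ∀ m < a, ∀ m' < a,
          ((ζ ^ m * (t : ℂ), -(ζ ^ m * (t : ℂ)) ^ (k - c)) : ℂ × ℂ)
            = (ζ ^ m' * (t : ℂ), -(ζ ^ m' * (t : ℂ)) ^ (k - c)) → m = m' := by
        intro t ht0 ht1 m hm m' hm' h
        have ht : ((t:ℝ):ℂ) ≠ 0 := by exact_mod_cast ht0.ne'
        have e1 : ζ ^ m = ζ ^ m' := by
          have := congrArg Prod.fst h
          simp only at this
          exact mul_right_cancel₀ ht this
        exact hζ.pow_inj hm hm' e1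
      obtain ⟨y', hfin, hcard⟩ := lower_gen U hU.1 hU.2.1 a
        (fun t m => (ζ ^ m * (t : ℂ), -(ζ ^ m * (t : ℂ)) ^ (k - c)))
        (fun t => (((t:ℝ):ℂ) ^ a, (0:ℂ))) h1 h2 h3 h4
      exact le_iSup_of_le y' (le_iSup_of_le hfin (by exact_mod_cast hcard))
    have upper : topdeg Set.univ f ≤ (a : ℕ∞) := by
      refine upper_gen Set.univ isOpen_univ (Set.mem_univ _) a ?_
      intro y hfin
      by_cases hy1 : y.1 = 0
      · rw [fiber_zero_card ha0 hc hk hf isOpen_univ (Set.mem_univ _) hy1 hfin]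
        exact Nat.zero_le a
      · exact fiber_card_le ha0 hf hy1
    exact le_antisymm upper lower
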